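/- Let Γ be a group, let n ≥ 1, and let f₁, …, fₙ : Γ → ℂ satisfy, for every k with 1 ≤ k ≤ n and all γ, δ ∈ Γ: f_k(γδ) + f_k(γδ⁻¹) = 2f_k(γ) + 2f_k(δ) + ∑_{j=1}^{k−1} binom(k,j)·f_j(γ)·f_{k−j}(δ). Then fₙ is a polynomial function of order less than 4ⁿ: for all γ₁, …, γ_{4ⁿ} ∈ Γ, the linearization f̂ₙ satisfies f̂ₙ((γ₁−1)(γ₂−1)⋯(γ_{4ⁿ}−1)) = 0. -/

import Mathlib

/-- The linearization of `f : Γ → ℂ` to a linear functional on the group algebra `ℂ[Γ]`. -/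
noncomputable def lin {Γ : Type*} [Group Γ] (f : Γ → ℂ) : MonoidAlgebra ℂ Γ →ₗ[ℂ] ℂ :=
  Finsupp.linearCombination ℂ f ∘ₗ (MonoidAlgebra.coeffLinearEquiv ℂ).toLinearMap

namespace JetsAux

variable {Γ : Type*} [Group Γ]

lemma lin_single (f : Γ → ℂ) (γ : Γ) (a : ℂ) :
    lin f (MonoidAlgebra.single γ a) = a * f γ := by
  show Finsupp.linearCombination ℂ f (Finsupp.single γ a) = _
  rw [Finsupp.linearCombination_single, smul_eq_mul]

lemma of_eq (γ : Γ) : MonoidAlgebra.of ℂ Γ γ = MonoidAlgebra.single γ 1 := rfl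

lemma one_eq : (1 : MonoidAlgebra ℂ Γ) = MonoidAlgebra.single (1 : Γ) (1 : ℂ) := rfl

/-- The antipode as a linear map. -/
noncomputable def sAnti : MonoidAlgebra ℂ Γ →ₗ[ℂ] MonoidAlgebra ℂ Γ :=
  MonoidAlgebra.mapDomainLinearMap ℂ ℂ (fun γ : Γ => γ⁻¹)

lemma sAnti_single (γ : Γ) (a : ℂ) :
    sAnti (MonoidAlgebra.single γ a) = MonoidAlgebra.single γ⁻¹ a := by
  rw [sAnti, MonoidAlgebra.mapDomainLinearMap_single]

lemma sAnti_of (γ : Γ) : sAnti (MonoidAlgebra.of ℂ Γ γ) = MonoidAlgebra.of ℂ Γ γ⁻¹ := by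
  rw [of_eq, sAnti_single, ← of_eq]

lemma sAnti_one : sAnti (1 : MonoidAlgebra ℂ Γ) = 1 := by
  rw [one_eq, sAnti_single, inv_one, ← one_eq]

lemma sAnti_sAnti (x : MonoidAlgebra ℂ Γ) : sAnti (sAnti x) = x := by
  induction x using MonoidAlgebra.induction_linear with
  | zero => simp
  | add f g hf hg => rw [map_add, map_add, hf, hg]
  | single a b => rw [sAnti_single, sAnti_single, inv_inv]

lemma sAnti_mul (x y : MonoidAlgebra ℂ Γ) : sAnti (x * y) = sAnti y * sAnti x := by
  induction x using MonoidAlgebra.induction_linear with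
  | zero => simp
  | add f g hf hg => rw [add_mul, map_add, hf, hg, map_add, mul_add]
  | single a b =>
    induction y using MonoidAlgebra.induction_linear with
    | zero => simp
    | add f g hf hg => rw [mul_add, map_add, hf, hg, map_add, add_mul]
    | single c d =>
      rw [MonoidAlgebra.single_mul_single, sAnti_single, sAnti_single, sAnti_single,
        MonoidAlgebra.single_mul_single, mul_inv_rev, mul_comm d b]

/-- The augmentation ideal as a submodule. -/
noncomputable def Iaug (Γ : Type*) [Group Γ] : Submodule ℂ (MonoidAlgebra ℂ Γ) :=
  Submodule.span ℂ {x | ∃ γ : Γ, x = MonoidAlgebra.of ℂ Γ γ - 1}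

lemma of_sub_one_mem (γ : Γ) : MonoidAlgebra.of ℂ Γ γ - 1 ∈ Iaug Γ :=
  Submodule.subset_span ⟨γ, rfl⟩

lemma eps_vanish {x : MonoidAlgebra ℂ Γ} (hx : x ∈ Iaug Γ) : lin (fun _ => (1:ℂ)) x = 0 := by
  induction hx using Submodule.span_induction with
  | mem x hx =>
    obtain ⟨γ, rfl⟩ := hx
    rw [map_sub, of_eq, lin_single, one_eq, lin_single]; ring
  | zero => simp
  | add x y _ _ hx hy => rw [map_add, hx, hy, add_zero]
  | smul c x _ hx => rw [map_smul, hx, smul_zero]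

lemma sAnti_mem {x : MonoidAlgebra ℂ Γ} (hx : x ∈ Iaug Γ) : sAnti x ∈ Iaug Γ := by
  induction hx using Submodule.span_induction with
  | mem x hx =>
    obtain ⟨γ, rfl⟩ := hx
    rw [map_sub, sAnti_of, sAnti_one]
    exact of_sub_one_mem γ⁻¹
  | zero => simp
  | add x y _ _ hx hy => rw [map_add]; exact Submodule.add_mem _ hx hy
  | smul c x _ hx => rw [map_smul]; exact Submodule.smul_mem _ _ hx

lemma mul_right_mem {x : MonoidAlgebra ℂ Γ} (hx : x ∈ Iaug Γ) (r : MonoidAlgebra ℂ Γ) :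
    x * r ∈ Iaug Γ := by
  induction hx using Submodule.span_induction with
  | mem x hx =>
    obtain ⟨γ, rfl⟩ := hx
    induction r using MonoidAlgebra.induction_linear with
    | zero => rw [mul_zero]; exact Submodule.zero_mem _
    | add f g hf hg => rw [mul_add]; exact Submodule.add_mem _ hf hg
    | single δ c =>
      have key : (MonoidAlgebra.of ℂ Γ γ - 1) * MonoidAlgebra.single δ c
          = c • ((MonoidAlgebra.of ℂ Γ (γ * δ) - 1) - (MonoidAlgebra.of ℂ Γ δ - 1)) := by
        rw [sub_mul, one_mul, of_eq γ, MonoidAlgebra.single_mul_single, one_mul,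
          smul_sub, smul_sub, smul_sub, of_eq (γ * δ), of_eq δ, MonoidAlgebra.smul_single,
          MonoidAlgebra.smul_single, smul_eq_mul, mul_one, sub_sub_sub_cancel_right]
      rw [key]
      exact Submodule.smul_mem _ _
        (Submodule.sub_mem _ (of_sub_one_mem (γ * δ)) (of_sub_one_mem δ))
  | zero => rw [zero_mul]; exact Submodule.zero_mem _
  | add x y _ _ hx hy => rw [add_mul]; exact Submodule.add_mem _ hx hy
  | smul c x _ hx => rw [smul_mul_assoc]; exact Submodule.smul_mem _ _ hx

lemma pow_mul_right_mem {m : ℕ} (hm : 1 ≤ m) :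
    ∀ x ∈ Iaug Γ ^ m, ∀ r : MonoidAlgebra ℂ Γ, x * r ∈ Iaug Γ ^ m := by
  induction m, hm using Nat.le_induction with
  | base =>
    intro x hx r
    rw [pow_one] at *
    exact mul_right_mem hx r
  | succ m hm ih =>
    intro x hx r
    rw [pow_succ] at hx ⊢
    refine Submodule.mul_induction_on (C := fun z => z * r ∈ Iaug Γ ^ m * Iaug Γ) hx
      (fun u hu v hv => ?_) (fun u v hu hv => ?_)
    · show u * v * r ∈ _
      rw [mul_assoc]
      exact Submodule.mul_mem_mul hu (mul_right_mem hv r)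
    · show (u + v) * r ∈ _
      rw [add_mul]; exact Submodule.add_mem _ hu hv

lemma pow_mono {a b : ℕ} (ha : 1 ≤ a) (hab : a ≤ b) : Iaug Γ ^ b ≤ Iaug Γ ^ a := by
  obtain ⟨t, rfl⟩ := Nat.exists_eq_add_of_le hab
  rw [pow_add]
  exact Submodule.mul_le.mpr fun u hu v _ => pow_mul_right_mem ha u hu v

lemma mem_Iaug_of_pow {m : ℕ} (hm : 1 ≤ m) {x : MonoidAlgebra ℂ Γ}
    (hx : x ∈ Iaug Γ ^ m) : x ∈ Iaug Γ := by
  have := pow_mono (le_refl 1) hm hx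
  rwa [pow_one] at this

/-- The linearized functional equation. -/
lemma linearized (F : Γ → ℂ) (J : Finset ℕ) (c : ℕ → ℂ) (u v : ℕ → Γ → ℂ)
    (H : ∀ γ δ : Γ, F (γ * δ) + F (γ * δ⁻¹) =
      2 * F γ + 2 * F δ + ∑ j ∈ J, c j * u j γ * v j δ)
    (x y : MonoidAlgebra ℂ Γ) :
    lin F (x * y) + lin F (x * sAnti y) =
      2 * lin (fun _ => (1:ℂ)) y * lin F x + 2 * lin (fun _ => (1:ℂ)) x * lin F y +
        ∑ j ∈ J, c j * lin (u j) x * lin (v j) y := by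
  induction x using MonoidAlgebra.induction_linear with
  | zero => simp
  | add x₁ x₂ h1 h2 =>
    simp only [add_mul, map_add, mul_add, add_mul, Finset.sum_add_distrib]
    linear_combination h1 + h2
  | single γ a =>
    induction y using MonoidAlgebra.induction_linear with
    | zero => simp
    | add y₁ y₂ h1 h2 =>
      simp only [mul_add, map_add, add_mul, mul_add, Finset.sum_add_distrib]
      linear_combination h1 + h2
    | single δ b =>
      rw [MonoidAlgebra.single_mul_single, sAnti_single, MonoidAlgebra.single_mul_single,
        lin_single, lin_single, lin_single, lin_single, lin_single, lin_single]
      have hs : ∀ j ∈ J, c j * lin (u j) (MonoidAlgebra.single γ a) * lin (v j) (MonoidAlgebra.single δ b)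
          = a * b * (c j * u j γ * v j δ) := by
        intro j _
        rw [lin_single, lin_single]; ring
      rw [Finset.sum_congr rfl hs, ← Finset.mul_sum]
      linear_combination (a * b) * H γ δ

end JetsAux

namespace JetsAux
variable {Γ : Type*} [Group Γ]

lemma main_vanish (n : ℕ) (f : ℕ → Γ → ℂ)
    (hf : ∀ k, 1 ≤ k → k ≤ n → ∀ γ δ : Γ,
      f k (γ * δ) + f k (γ * δ⁻¹) =
        2 * f k γ + 2 * f k δ +
          ∑ j ∈ Finset.Ico 1 k, (k.choose j : ℂ) * f j γ * f (k - j) δ) :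
    ∀ k, 1 ≤ k → k ≤ n → ∀ x ∈ Iaug Γ ^ (4 ^ k), lin (f k) x = 0 := by
  intro k
  induction k using Nat.strong_induction_on with
  | _ k ih =>
  intro hk1 hkn
  set p := 4 ^ (k - 1) with hp
  have hp1 : 1 ≤ p := Nat.one_le_pow _ _ (by norm_num)
  -- previous functions vanish on Iaug ^ p
  have hvan : ∀ j ∈ Finset.Ico 1 k, ∀ x ∈ Iaug Γ ^ p, lin (f j) x = 0 := by
    intro j hj x hx
    obtain ⟨hj1, hjk⟩ := Finset.mem_Ico.mp hj
    refine ih j hjk hj1 (le_trans (le_of_lt hjk) hkn) x ?_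
    refine pow_mono (Nat.one_le_pow _ _ (by norm_num)) ?_ hx
    exact Nat.pow_le_pow_right (by norm_num) (by omega)
  have hF := linearized (f k) (Finset.Ico 1 k) (fun j => (k.choose j : ℂ))
    (fun j => f j) (fun j => f (k - j)) (hf k hk1 hkn)
  set g := lin (f k) with hg
  -- the flip relation
  have hR : ∀ x ∈ Iaug Γ ^ p, ∀ y ∈ Iaug Γ, g (x * y) = - g (x * sAnti y) := by
    intro x hx y hy
    have h := hF x y
    have e1 : lin (fun _ => (1:ℂ)) x = 0 := eps_vanish (mem_Iaug_of_pow hp1 hx)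
    have e2 : lin (fun _ => (1:ℂ)) y = 0 := eps_vanish hy
    have e3 : ∑ j ∈ Finset.Ico 1 k, (k.choose j : ℂ) * lin (f j) x * lin (f (k - j)) y = 0 :=
      Finset.sum_eq_zero fun j hj => by rw [hvan j hj x hx]; ring
    rw [e1, e2, e3] at h
    linear_combination h
  have hS : ∀ x ∈ Iaug Γ ^ p, ∀ a ∈ Iaug Γ, ∀ b ∈ Iaug Γ,
      g (x * a * b) = - g (x * b * a) := by
    intro x hx a ha b hb
    have h1 : g (x * a * b) = - g (x * a * sAnti b) :=
      hR (x * a) (pow_mul_right_mem hp1 x hx a) b hb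
    have h2 : g (x * (a * sAnti b)) = - g (x * sAnti (a * sAnti b)) :=
      hR x hx (a * sAnti b) (mul_right_mem ha (sAnti b))
    have h3 : g (x * b * a) = - g (x * b * sAnti a) :=
      hR (x * b) (pow_mul_right_mem hp1 x hx b) a ha
    rw [sAnti_mul, sAnti_sAnti] at h2
    simp only [← mul_assoc] at h2
    linear_combination h1 - h2 + h3
  have hT : ∀ x ∈ Iaug Γ ^ p, ∀ a ∈ Iaug Γ, ∀ b ∈ Iaug Γ, ∀ c ∈ Iaug Γ,
      g (x * a * b * c) = 0 := by
    intro x hx a ha b hb c hc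
    have h1 : g (x * a * (b * c)) = - g (x * (b * c) * a) :=
      hS x hx a ha (b * c) (mul_right_mem hb c)
    have h2 : g (x * b * (c * a)) = - g (x * (c * a) * b) :=
      hS x hx b hb (c * a) (mul_right_mem hc a)
    have h3 : g (x * c * (a * b)) = - g (x * (a * b) * c) :=
      hS x hx c hc (a * b) (mul_right_mem ha b)
    simp only [← mul_assoc] at h1 h2 h3 ⊢
    linear_combination (h1 - h2 + h3) / 2
  -- vanishing on Iaug ^ (p + 3)
  have step1 : ∀ z ∈ Iaug Γ ^ p * Iaug Γ, ∀ b ∈ Iaug Γ, ∀ c ∈ Iaug Γ, g (z * b * c) = 0 := by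
    intro z hz
    refine Submodule.mul_induction_on
      (C := fun z => ∀ b ∈ Iaug Γ, ∀ c ∈ Iaug Γ, g (z * b * c) = 0) hz
      (fun u hu v hv b hb c hc => hT u hu v hv b hb c hc)
      (fun u v hu hv b hb c hc => ?_)
    rw [add_mul, add_mul, map_add, hu b hb c hc, hv b hb c hc, add_zero]
  have step2 : ∀ z ∈ Iaug Γ ^ p * Iaug Γ * Iaug Γ, ∀ c ∈ Iaug Γ, g (z * c) = 0 := by
    intro z hz
    refine Submodule.mul_induction_on
      (C := fun z => ∀ c ∈ Iaug Γ, g (z * c) = 0) hz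
      (fun u hu v hv c hc => step1 u hu v hv c hc)
      (fun u v hu hv c hc => ?_)
    rw [add_mul, map_add, hu c hc, hv c hc, add_zero]
  have step3 : ∀ z ∈ Iaug Γ ^ p * Iaug Γ * Iaug Γ * Iaug Γ, g z = 0 := by
    intro z hz
    refine Submodule.mul_induction_on (C := fun z => g z = 0) hz
      (fun u hu v hv => step2 u hu v hv)
      (fun u v hu hv => by
        have hu' : g u = 0 := hu
        have hv' : g v = 0 := hv
        show g (u + v) = 0
        rw [map_add, hu', hv', add_zero])
  have hpow : Iaug Γ ^ (p + 3) = Iaug Γ ^ p * Iaug Γ * Iaug Γ * Iaug Γ := by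
    rw [show p + 3 = p + 1 + 1 + 1 by omega, pow_succ, pow_succ, pow_succ]
  intro x hx
  refine step3 x ?_
  rw [← hpow]
  refine pow_mono (by omega) ?_ hx
  have h4 : 4 ^ k = 4 * p := by
    rw [hp, ← pow_succ']
    congr 1
    omega
  omega
end JetsAux

namespace JetsAux
variable {Γ : Type*} [Group Γ]

lemma list_prod_mem_pow (L : List (MonoidAlgebra ℂ Γ)) (hL : ∀ x ∈ L, x ∈ Iaug Γ) :
    L.prod ∈ Iaug Γ ^ L.length := by
  induction L with
  | nil =>
    rw [List.prod_nil, List.length_nil, pow_zero]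
    exact Submodule.one_le.mp le_rfl
  | cons a L ih =>
    rw [List.prod_cons, List.length_cons, pow_succ']
    exact Submodule.mul_mem_mul (hL a List.mem_cons_self)
      (ih fun x hx => hL x (List.mem_cons_of_mem a hx))

end JetsAux

theorem jets_are_polynomial {Γ : Type*} [Group Γ] (n : ℕ) (hn : 1 ≤ n) (f : ℕ → Γ → ℂ)
    (hf : ∀ k, 1 ≤ k → k ≤ n → ∀ γ δ : Γ,
      f k (γ * δ) + f k (γ * δ⁻¹) =
        2 * f k γ + 2 * f k δ +
          ∑ j ∈ Finset.Ico 1 k, (k.choose j : ℂ) * f j γ * f (k - j) δ) :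
    ∀ γ : Fin (4 ^ n) → Γ,
      lin (f n) ((List.ofFn fun i => MonoidAlgebra.of ℂ Γ (γ i) - 1).prod) = 0 := by
  intro γ
  refine JetsAux.main_vanish n f hf n hn le_rfl _ ?_
  have := JetsAux.list_prod_mem_pow (List.ofFn fun i => MonoidAlgebra.of ℂ Γ (γ i) - 1)
    (fun x hx => by
      rw [List.mem_ofFn] at hx
      obtain ⟨i, rfl⟩ := hx
      exact JetsAux.of_sub_one_mem (γ i))
  simpa using this
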